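/- For the chain model S = ε_S, X = γS + ε_X, Y = αX + ε_Y (diagram S → X → Y), with independent centered errors of positive variances, the partial regression coefficient β_{YX·S} = σ_{XY·S}/σ²_{X·S} equals β_{YX} = σ_{XY}/σ²_X; in particular conditioning on S cannot reverse the sign of the regression coefficient (no Simpson's paradox). -/

import Mathlib

open MeasureTheory ProbabilityTheory

/-- Covariance of two real random variables. -/
noncomputable def cov {Ω : Type*} [MeasurableSpace Ω] (μ : Measure Ω) (X Y : Ω → ℝ) : ℝ :=
  ∫ ω, X ω * Y ω ∂μ - (∫ ω, X ω ∂μ) * (∫ ω, Y ω ∂μ)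

/-- Collapsibility of the regression coefficient over S for the diagram S → X → Y:
β_{YX·S} = β_{YX}; in particular conditioning on S cannot reverse the sign of the
regression coefficient (no Simpson's paradox). -/
theorem stmt8 {Ω : Type*} [MeasurableSpace Ω] (μ : Measure Ω) [IsProbabilityMeasure μ]
    (α γ : ℝ) (e : Fin 3 → Ω → ℝ) (S X Y : Ω → ℝ)
    (hmeas : ∀ i, Measurable (e i))
    (hindep : iIndepFun e μ)
    (hL2 : ∀ i, MemLp (e i) 2 μ)
    (hmean : ∀ i, ∫ ω, e i ω ∂μ = 0)
    (hvar : ∀ i, 0 < cov μ (e i) (e i))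
    (hS : ∀ ω, S ω = e 0 ω)
    (hX : ∀ ω, X ω = γ * S ω + e 1 ω)
    (hY : ∀ ω, Y ω = α * X ω + e 2 ω)
    (hpart : 0 < cov μ X X - (cov μ X S) ^ 2 / cov μ S S) :
    (cov μ X Y - cov μ X S * cov μ S Y / cov μ S S)
        / (cov μ X X - (cov μ X S) ^ 2 / cov μ S S)
      = cov μ X Y / cov μ X X ∧
    Real.sign ((cov μ X Y - cov μ X S * cov μ S Y / cov μ S S)
        / (cov μ X X - (cov μ X S) ^ 2 / cov μ S S))
      = Real.sign (cov μ X Y / cov μ X X) := by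
  have hInt : ∀ i, Integrable (e i) μ := fun i => (hL2 i).integrable one_le_two
  have hsq : ∀ i, Integrable (fun ω => e i ω * e i ω) μ := by
    intro i
    have := (hL2 i).integrable_sq
    simpa [pow_two] using this
  have hij : ∀ i j, i ≠ j → Integrable (fun ω => e i ω * e j ω) μ := by
    intro i j hne
    exact (hindep.indepFun hne).integrable_mul (hInt i) (hInt j)
  have hzero : ∀ i j, i ≠ j → ∫ ω, e i ω * e j ω ∂μ = 0 := by
    intro i j hne
    have := (hindep.indepFun hne).integral_fun_mul_eq_mul_integral (hInt i).aestronglyMeasurable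
      (hInt j).aestronglyMeasurable
    simpa [hmean i] using this
  set v : Fin 3 → ℝ := fun i => ∫ ω, e i ω * e i ω ∂μ with hv
  have hvpos : ∀ i, 0 < v i := by
    intro i
    have := hvar i
    simpa [cov, hmean i] using this
  -- means
  have hmS : ∫ ω, S ω ∂μ = 0 := by
    simp only [hS]; exact hmean 0
  have hmX : ∫ ω, X ω ∂μ = 0 := by
    have : (fun ω => X ω) = fun ω => γ * e 0 ω + e 1 ω := by
      funext ω; rw [hX, hS]
    rw [this, integral_add ((hInt 0).const_mul γ) (hInt 1), integral_const_mul,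
      hmean 0, hmean 1]; ring
  have hmY : ∫ ω, Y ω ∂μ = 0 := by
    have : (fun ω => Y ω) = fun ω => α * X ω + e 2 ω := by funext ω; rw [hY]
    have hXint : Integrable X μ := by
      have : X = fun ω => γ * e 0 ω + e 1 ω := by funext ω; rw [hX, hS]
      rw [this]; exact ((hInt 0).const_mul γ).add (hInt 1)
    rw [this, integral_add (hXint.const_mul α) (hInt 2), integral_const_mul,
      hmX, hmean 2]; ring
  -- covariances
  have hcSS : cov μ S S = v 0 := by
    have : (fun ω => S ω * S ω) = fun ω => e 0 ω * e 0 ω := by funext ω; rw [hS]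
    simp [cov, this, hmS, hv]
  have hXSint : Integrable (fun ω => γ * (e 0 ω * e 0 ω) + e 1 ω * e 0 ω) μ :=
    ((hsq 0).const_mul γ).add (hij 1 0 (by decide))
  have hcXS : cov μ X S = γ * v 0 := by
    have h1 : (fun ω => X ω * S ω) = fun ω => γ * (e 0 ω * e 0 ω) + e 1 ω * e 0 ω := by
      funext ω; rw [hX, hS]; ring
    rw [cov, h1, integral_add ((hsq 0).const_mul γ) (hij 1 0 (by decide)),
      integral_const_mul, hzero 1 0 (by decide), hmS]
    ring
  have hcXX : cov μ X X = γ ^ 2 * v 0 + v 1 := by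
    have h1 : (fun ω => X ω * X ω)
        = fun ω => γ ^ 2 * (e 0 ω * e 0 ω) + (2 * γ) * (e 0 ω * e 1 ω) + e 1 ω * e 1 ω := by
      funext ω; rw [hX, hS]; ring
    have hA : Integrable (fun ω => γ ^ 2 * (e 0 ω * e 0 ω) + (2 * γ) * (e 0 ω * e 1 ω)) μ :=
      ((hsq 0).const_mul _).add ((hij 0 1 (by decide)).const_mul _)
    rw [cov, h1, integral_add hA (hsq 1),
      integral_add ((hsq 0).const_mul _) ((hij 0 1 (by decide)).const_mul _),
      integral_const_mul, integral_const_mul, hzero 0 1 (by decide), hmX]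
    ring
  have hXXint : Integrable (fun ω => X ω * X ω) μ := by
    have h1 : (fun ω => X ω * X ω)
        = fun ω => γ ^ 2 * (e 0 ω * e 0 ω) + (2 * γ) * (e 0 ω * e 1 ω) + e 1 ω * e 1 ω := by
      funext ω; rw [hX, hS]; ring
    rw [h1]
    exact (((hsq 0).const_mul _).add ((hij 0 1 (by decide)).const_mul _)).add (hsq 1)
  have hXe2 : ∫ ω, X ω * e 2 ω ∂μ = 0 := by
    have h1 : (fun ω => X ω * e 2 ω) = fun ω => γ * (e 0 ω * e 2 ω) + e 1 ω * e 2 ω := by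
      funext ω; rw [hX, hS]; ring
    rw [h1, integral_add ((hij 0 2 (by decide)).const_mul γ) (hij 1 2 (by decide)),
      integral_const_mul, hzero 0 2 (by decide), hzero 1 2 (by decide)]
    ring
  have hcXY : cov μ X Y = α * (γ ^ 2 * v 0 + v 1) := by
    have h1 : (fun ω => X ω * Y ω) = fun ω => α * (X ω * X ω) + X ω * e 2 ω := by
      funext ω; rw [hY]; ring
    have hXe2int : Integrable (fun ω => X ω * e 2 ω) μ := by
      have h2 : (fun ω => X ω * e 2 ω) = fun ω => γ * (e 0 ω * e 2 ω) + e 1 ω * e 2 ω := by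
        funext ω; rw [hX, hS]; ring
      rw [h2]; exact ((hij 0 2 (by decide)).const_mul γ).add (hij 1 2 (by decide))
    rw [cov, h1, integral_add (hXXint.const_mul α) hXe2int, integral_const_mul, hXe2, hmY]
    have : ∫ ω, X ω * X ω ∂μ = γ ^ 2 * v 0 + v 1 := by
      have := hcXX; rw [cov, hmX] at this; linarith
    rw [this]; ring
  have hcSY : cov μ S Y = α * (γ * v 0) := by
    have h1 : (fun ω => S ω * Y ω) = fun ω => α * (X ω * S ω) + e 0 ω * e 2 ω := by
      funext ω; rw [hY, hS]; ring
    have hXSint' : Integrable (fun ω => X ω * S ω) μ := by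
      have h2 : (fun ω => X ω * S ω) = fun ω => γ * (e 0 ω * e 0 ω) + e 1 ω * e 0 ω := by
        funext ω; rw [hX, hS]; ring
      rw [h2]; exact hXSint
    rw [cov, h1, integral_add (hXSint'.const_mul α) (hij 0 2 (by decide)),
      integral_const_mul, hzero 0 2 (by decide), hmS]
    have : ∫ ω, X ω * S ω ∂μ = γ * v 0 := by
      have := hcXS; rw [cov, hmS, mul_zero, sub_zero] at this; exact this
    rw [this]; ring
  -- final computation
  have h0 : v 0 ≠ 0 := ne_of_gt (hvpos 0)
  have h1pos : (0:ℝ) < v 1 := hvpos 1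
  have hXXpos : 0 < cov μ X X := by
    rw [hcXX]; nlinarith [sq_nonneg γ, hvpos 0]
  have hnum : cov μ X Y - cov μ X S * cov μ S Y / cov μ S S = α * v 1 := by
    rw [hcXY, hcXS, hcSY, hcSS]; field_simp; ring
  have hden : cov μ X X - (cov μ X S) ^ 2 / cov μ S S = v 1 := by
    rw [hcXX, hcXS, hcSS]; field_simp; ring
  have hL : (cov μ X Y - cov μ X S * cov μ S Y / cov μ S S)
      / (cov μ X X - (cov μ X S) ^ 2 / cov μ S S) = α := by
    rw [hnum, hden, mul_div_assoc, div_self (ne_of_gt h1pos), mul_one]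
  have hR : cov μ X Y / cov μ X X = α := by
    have hp : γ ^ 2 * v 0 + v 1 ≠ 0 := by
      have := hXXpos; rw [hcXX] at this; exact ne_of_gt this
    rw [hcXY, hcXX, mul_div_assoc, div_self hp, mul_one]
  refine ⟨by rw [hL, hR], by rw [hL, hR]⟩
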